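/- Let M, N be positive reals with M ≤ N, and K a real with N/M < K ≤ N/M + 1. For α ∈ [1/2, 1], the inequality Mα + (N-M)(1-α)/(K-1) ≤ M(1-α) + Nα/K holds if and only if α ≤ K/(2K-1). -/

import Mathlib

theorem stmt_1 (M N K : ℝ) (hM : 0 < M) (hN : 0 < N) (hMN : M ≤ N)
    (hK1 : N / M < K) (hK2 : K ≤ N / M + 1)
    (α : ℝ) (hα0 : 1/2 ≤ α) (hα1 : α ≤ 1) :
    M * α + (N - M) * (1 - α) / (K - 1) ≤ M * (1 - α) + N * α / K ↔
      α ≤ K / (2 * K - 1) := by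
  have h1 : (0:ℝ) < K - 1 := by
    have : (1:ℝ) ≤ N / M := (one_le_div hM).2 hMN
    linarith
  have h2 : (0:ℝ) < K := by linarith
  have h4 : (0:ℝ) < 2 * K - 1 := by linarith
  have h3 : N < M * K := by
    have := (div_lt_iff₀ hM).1 hK1
    linarith [this]
  have hA : (N - M) * (1 - α) / (K - 1) * ((K - 1) * K) = (N - M) * (1 - α) * K := by
    field_simp
  have hB : N * α / K * ((K - 1) * K) = N * α * (K - 1) := by
    field_simp
  constructor <;> intro h
  · rw [le_div_iff₀ h4]
    nlinarith [mul_le_mul_of_nonneg_right h (mul_nonneg h1.le h2.le), hA, hB, h3,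
      mul_pos (sub_pos.2 h3) h4]
  · rw [le_div_iff₀ h4] at h
    rw [← mul_le_mul_iff_of_pos_right (mul_pos h1 h2)]
    nlinarith [hA, hB, h3, mul_le_mul_of_nonneg_left h (sub_pos.2 h3).le]
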